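/- Let k be an algebraically closed field, V a finite-dimensional k-vector space, and f : Module.End k V a linear endomorphism. Then the eventual image of f is the sum of the generalized eigenspaces for the nonzero eigenvalues: ⨅_{n ∈ ℕ} range(f^n) = ⨆_{λ ∈ k, λ ≠ 0} maxGenEigenspace(f, λ). -/

import Mathlib

/-- Over an algebraically closed field, the eventual image of an endomorphism `f` of a
finite-dimensional vector space is the sum of the generalized eigenspaces of `f` for
the nonzero eigenvalues. -/
theorem eventualImage_eq_sup_maxGenEigenspace (k : Type*) [Field k] [IsAlgClosed k]
    (V : Type*) [AddCommGroup V] [Module k V] [FiniteDimensional k V]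
    (f : Module.End k V) :
    (⨅ n : ℕ, LinearMap.range (f ^ n)) =
      ⨆ (μ : k) (_ : μ ≠ 0), f.maxGenEigenspace μ := by
  set S := ⨆ (μ : k) (_ : μ ≠ 0), f.maxGenEigenspace μ with hS
  set W := ⨅ n : ℕ, LinearMap.range (f ^ n) with hW
  have hV0eq : f.maxGenEigenspace 0 = ⨆ n : ℕ, LinearMap.ker (f ^ n) := by
    simp [← Module.End.iSup_genEigenspace_eq, Module.End.genEigenspace_nat]
  have hdisj : f.maxGenEigenspace 0 ⊓ W = ⊥ := by
    rw [hV0eq]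
    exact f.isCompl_iSup_ker_pow_iInf_range_pow.inf_eq_bot
  have hSW : S ≤ W := by
    refine iSup₂_le fun μ hμ ↦ le_iInf fun n ↦ ?_
    have hmt : Set.MapsTo f ↑(f.maxGenEigenspace μ) ↑(f.maxGenEigenspace μ) :=
      Module.End.mapsTo_maxGenEigenspace_of_comm rfl μ
    set g := f.restrict hmt with hg
    have hnil := f.isNilpotent_restrict_maxGenEigenspace_sub_algebraMap μ
    have hsub : g - algebraMap k _ μ
        = (f - algebraMap k (Module.End k V) μ).restrict
          (Module.End.mapsTo_maxGenEigenspace_of_comm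
            (Algebra.mul_sub_algebraMap_commutes f μ) μ) := by
      ext x
      simp [g, LinearMap.restrict_apply, Module.algebraMap_end_apply, sub_smul]
      rfl
    have hunit : IsUnit g := by
      have h1 : IsUnit (algebraMap k (Module.End k ↥(f.maxGenEigenspace μ)) μ) :=
        (isUnit_iff_ne_zero.2 hμ).map (algebraMap k _)
      have := (hsub ▸ hnil : IsNilpotent (g - algebraMap k _ μ)).isUnit_add_right_of_commute h1
        (Algebra.commutes μ _).symm
      simpa using this
    intro x hx
    obtain ⟨y, hy⟩ := ((Module.End.isUnit_iff _).mp (hunit.pow n)).surjective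
      ⟨x, (by exact hx)⟩
    rw [LinearMap.mem_range]
    refine ⟨y, ?_⟩
    have : ((g ^ n) y : V) = x := by rw [show (g ^ n) y = _ from hy]
    rw [hg, Module.End.pow_restrict n hmt] at this
    simpa [LinearMap.restrict_apply] using this
  have htop : f.maxGenEigenspace 0 ⊔ S = ⊤ := by
    rw [hS, ← iSup_split_single (fun μ ↦ f.maxGenEigenspace μ) 0]
    exact Module.End.iSup_maxGenEigenspace_eq_top f
  have := sup_inf_assoc_of_le (f.maxGenEigenspace 0) hSW
  rw [hdisj, sup_bot_eq, sup_comm, htop, top_inf_eq] at this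
  exact this
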